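/- For any two Borel probability measures μ, ν on a compact subset S of ℝ, ρ_tv(μ,ν)² ≤ 4 J(μ,ν), where ρ_tv(μ,ν) = 2·sup{ |μ(A) − ν(A)| : A ⊆ S Borel } is the total variation distance. Equivalently, (sup_A |μ(A) − ν(A)|)² ≤ J(μ,ν). -/

import Mathlib

open MeasureTheory ProbabilityTheory Filter Topology
open scoped ENNReal NNReal Classical

/-- Relative entropy (Kullback–Leibler divergence) `H(υ|μ)`, as an extended real:
`∫ log(dυ/dμ) dυ` if `υ ≪ μ` (and the integral exists), and `+∞` otherwise. -/
noncomputable def relEnt {α : Type*} [MeasurableSpace α] (υ μ : Measure α) : EReal :=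
  if υ ≪ μ ∧ Integrable (llr υ μ) υ then ((∫ x, llr υ μ x ∂υ : ℝ) : EReal) else ⊤

/-- The J-divergence `J(μ,ν) = inf { H(υ|μ) + H(υ|ν) : υ a probability measure }`. -/
noncomputable def Jdiv {α : Type*} [MeasurableSpace α] (μ ν : Measure α) : EReal :=
  ⨅ (υ : Measure α) (_ : IsProbabilityMeasure υ), relEnt υ μ + relEnt υ ν

open Set in
lemma scalar_pinsker {x : ℝ} (hx : 0 ≤ x) :
    3 * (x - 1) ^ 2 ≤ (2 * x + 4) * (x * Real.log x - x + 1) := by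
  set F : ℝ → ℝ := fun y => (2 * y + 4) * (y * Real.log y - y + 1) - 3 * (y - 1) ^ 2 with hF
  suffices h : 0 ≤ F x by simpa [hF] using h
  set g : ℝ → ℝ := fun y => 2 * (y * Real.log y - y + 1) + (2 * y + 4) * Real.log y - 6 * (y - 1)
    with hg
  have hg_deriv : ∀ y : ℝ, 0 < y → HasDerivAt g (4 * Real.log y + 4 / y - 4) y := by
    intro y hy
    have h1 : HasDerivAt (fun t : ℝ => t * Real.log t) (Real.log y + 1) y :=
      Real.hasDerivAt_mul_log hy.ne'
    have h2 : HasDerivAt (fun t : ℝ => 2 * (t * Real.log t - t + 1))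
        (2 * ((Real.log y + 1) - 1)) y := (((h1.sub (hasDerivAt_id y)).add_const 1).const_mul 2)
    have h3 : HasDerivAt (fun t : ℝ => (2 * t + 4) * Real.log t)
        (2 * Real.log y + (2 * y + 4) * y⁻¹) y := by
      have := (((hasDerivAt_id y).const_mul 2).add_const 4).mul (Real.hasDerivAt_log hy.ne')
      have hy' : y ≠ 0 := hy.ne'
      refine this.congr_deriv ?_
      simp only [id_eq]
      field_simp
    have h4 : HasDerivAt (fun t : ℝ => 6 * (t - 1)) 6 y := by
      simpa using ((hasDerivAt_id y).sub_const 1).const_mul 6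
    have := (h2.add h3).sub h4
    have hy' : y ≠ 0 := hy.ne'
    refine this.congr_deriv ?_
    field_simp
    ring
  have hF_deriv : ∀ y : ℝ, 0 < y → HasDerivAt F (g y) y := by
    intro y hy
    have h1 : HasDerivAt (fun t : ℝ => t * Real.log t) (Real.log y + 1) y :=
      Real.hasDerivAt_mul_log hy.ne'
    have hphi : HasDerivAt (fun t : ℝ => t * Real.log t - t + 1) (Real.log y) y := by
      simpa using (h1.sub (hasDerivAt_id y)).add_const 1
    have hlin : HasDerivAt (fun t : ℝ => 2 * t + 4) 2 y := by
      simpa using ((hasDerivAt_id y).const_mul 2).add_const 4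
    have hsq : HasDerivAt (fun t : ℝ => 3 * (t - 1) ^ 2) (3 * (2 * (y - 1))) y := by
      simpa using (((hasDerivAt_id y).sub_const 1).pow 2).const_mul 3
    have := (hlin.mul hphi).sub hsq
    refine this.congr_deriv ?_
    simp only [hg]
    ring
  have hg1 : g 1 = 0 := by simp [hg]
  have hgmono : MonotoneOn g (Ioi (0:ℝ)) := by
    have hint : interior (Ioi (0:ℝ)) = Ioi 0 := interior_Ioi
    refine monotoneOn_of_deriv_nonneg (convex_Ioi 0)
      (fun y hy => ((hg_deriv y hy).continuousAt.continuousWithinAt))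
      (fun y hy => ((hg_deriv y (by rw [hint] at hy; exact hy)).differentiableAt.differentiableWithinAt))
      (fun y hy => ?_)
    rw [hint] at hy
    rw [(hg_deriv y hy).deriv]
    have hli : Real.log y⁻¹ ≤ y⁻¹ - 1 := Real.log_le_sub_one_of_pos (inv_pos.mpr hy)
    rw [Real.log_inv] at hli
    have : 4 / y = 4 * y⁻¹ := by ring
    nlinarith
  have hF1 : F 1 = 0 := by simp [hF]
  rcases eq_or_lt_of_le hx with h0 | h0
  · simp [hF, ← h0]; norm_num
  rcases le_total x 1 with hx1 | hx1
  · -- antitone on Ioc 0 1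
    have hanti : AntitoneOn F (Ioc (0:ℝ) 1) := by
      refine antitoneOn_of_deriv_nonpos (convex_Ioc 0 1)
        (fun y hy => ((hF_deriv y hy.1).continuousAt.continuousWithinAt))
        (fun y hy => ?_) (fun y hy => ?_)
      · rw [interior_Ioc] at hy
        exact (hF_deriv y hy.1).differentiableAt.differentiableWithinAt
      · rw [interior_Ioc] at hy
        rw [(hF_deriv y hy.1).deriv]
        have := hgmono (mem_Ioi.mpr hy.1) (mem_Ioi.mpr one_pos) hy.2.le
        linarith [hg1 ▸ this]
    have := hanti (mem_Ioc.mpr ⟨h0, hx1⟩) (mem_Ioc.mpr ⟨one_pos, le_refl 1⟩) hx1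
    linarith [hF1 ▸ this]
  · have hmonoF : MonotoneOn F (Ici (1:ℝ)) := by
      refine monotoneOn_of_deriv_nonneg (convex_Ici 1)
        (fun y hy => ((hF_deriv y (lt_of_lt_of_le one_pos hy)).continuousAt.continuousWithinAt))
        (fun y hy => ?_) (fun y hy => ?_)
      · rw [interior_Ici] at hy
        exact (hF_deriv y (lt_trans one_pos hy)).differentiableAt.differentiableWithinAt
      · rw [interior_Ici] at hy
        rw [(hF_deriv y (lt_trans one_pos hy)).deriv]
        have := hgmono (mem_Ioi.mpr one_pos) (mem_Ioi.mpr (lt_trans one_pos hy)) (le_of_lt hy)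
        linarith [hg1 ▸ this]
    have := hmonoF (mem_Ici.mpr (le_refl 1)) (mem_Ici.mpr hx1) hx1
    linarith [hF1 ▸ this]

lemma pinsker_bound {α : Type*} [MeasurableSpace α] (υ μ : Measure α)
    [IsProbabilityMeasure υ] [IsProbabilityMeasure μ] (hac : υ ≪ μ)
    (hint : Integrable (MeasureTheory.llr υ μ) υ) :
    0 ≤ ∫ x, llr υ μ x ∂υ ∧
    ∀ A : Set α, MeasurableSet A →
      |(υ A).toReal - (μ A).toReal| ≤ Real.sqrt ((∫ x, llr υ μ x ∂υ) / 2) := by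
  set f : α → ℝ := fun x => (υ.rnDeriv μ x).toReal with hfdef
  have hf_meas : Measurable f := (Measure.measurable_rnDeriv υ μ).ennreal_toReal
  have hf_nonneg : ∀ x, 0 ≤ f x := fun x => ENNReal.toReal_nonneg
  have hf_int : Integrable f μ := Measure.integrable_toReal_rnDeriv
  have hf1 : ∫ x, f x ∂μ = 1 := by
    rw [Measure.integral_toReal_rnDeriv hac]; simp
  have hKL : ∫ x, llr υ μ x ∂υ = ∫ x, f x * Real.log (f x) ∂μ := by
    rw [← MeasureTheory.integral_rnDeriv_smul hac (f := llr υ μ)]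
    simp [llr_def, smul_eq_mul, hfdef]
  have hflogf_int : Integrable (fun x => f x * Real.log (f x)) μ := by
    have := (MeasureTheory.integrable_rnDeriv_smul_iff hac (f := llr υ μ)).mpr hint
    simpa [llr_def, smul_eq_mul, hfdef] using this
  set K := ∫ x, llr υ μ x ∂υ with hKdef
  set g : α → ℝ := fun x => Real.sqrt ((2 * f x + 4) / 3) with hgdef
  set h : α → ℝ := fun x => Real.sqrt (f x * Real.log (f x) - f x + 1) with hhdef
  have hphi_nonneg : ∀ x, 0 ≤ f x * Real.log (f x) - f x + 1 := by
    intro x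
    have hs := scalar_pinsker (hf_nonneg x)
    nlinarith [sq_nonneg (f x - 1), hf_nonneg x]
  have hg_sq : ∀ x, g x ^ 2 = (2 * f x + 4) / 3 := fun x =>
    Real.sq_sqrt (by positivity)
  have hh_sq : ∀ x, h x ^ 2 = f x * Real.log (f x) - f x + 1 := fun x =>
    Real.sq_sqrt (hphi_nonneg x)
  have hpoint : ∀ x, |f x - 1| ≤ g x * h x := by
    intro x
    have hs := scalar_pinsker (hf_nonneg x)
    have h1 : (f x - 1) ^ 2 ≤ ((2 * f x + 4) / 3) * (f x * Real.log (f x) - f x + 1) := by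
      nlinarith
    calc |f x - 1| = Real.sqrt ((f x - 1) ^ 2) := (Real.sqrt_sq_eq_abs _).symm
      _ ≤ Real.sqrt (((2 * f x + 4) / 3) * (f x * Real.log (f x) - f x + 1)) :=
          Real.sqrt_le_sqrt h1
      _ = g x * h x := by rw [Real.sqrt_mul (by positivity)]
  have hlin_int : Integrable (fun x => (2 * f x + 4) / 3) μ :=
    ((hf_int.const_mul 2).add (integrable_const 4)).div_const 3
  have hsub_int : Integrable (fun x => f x * Real.log (f x) - f x) μ := hflogf_int.sub hf_int
  have hphi_int : Integrable (fun x => f x * Real.log (f x) - f x + 1) μ :=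
    hsub_int.add (integrable_const 1)
  have hgsq_int : Integrable (fun x => g x ^ 2) μ := by
    refine hlin_int.congr ?_
    exact Filter.Eventually.of_forall fun x => (hg_sq x).symm
  have hhsq_int : Integrable (fun x => h x ^ 2) μ := by
    refine hphi_int.congr ?_
    exact Filter.Eventually.of_forall fun x => (hh_sq x).symm
  have hphi_integral : ∫ x, (f x * Real.log (f x) - f x + 1) ∂μ = ∫ x, f x * Real.log (f x) ∂μ := by
    rw [integral_add hsub_int (integrable_const 1), integral_sub hflogf_int hf_int, hf1]
    simp
  have hg_memℒp : MemLp g 2 μ := by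
    refine (memLp_two_iff_integrable_sq ?_).mpr hgsq_int
    exact (Measurable.sqrt (by fun_prop)).aestronglyMeasurable
  have hh_memℒp : MemLp h 2 μ := by
    refine (memLp_two_iff_integrable_sq ?_).mpr hhsq_int
    refine (Measurable.sqrt ?_).aestronglyMeasurable
    exact ((hf_meas.mul (hf_meas.log)).sub hf_meas).add measurable_const
  have hgh_int : Integrable (fun x => g x * h x) μ := by
    refine Integrable.mono' ((hgsq_int.add hhsq_int).div_const 2) ?_ ?_
    · exact (hg_memℒp.aestronglyMeasurable.mul hh_memℒp.aestronglyMeasurable)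
    · refine Filter.Eventually.of_forall fun x => ?_
      have hgx : 0 ≤ g x := Real.sqrt_nonneg _
      have hhx : 0 ≤ h x := Real.sqrt_nonneg _
      rw [Real.norm_of_nonneg (mul_nonneg hgx hhx)]
      simp only [Pi.add_apply]
      nlinarith [sq_nonneg (g x - h x)]
  have hKnn : 0 ≤ K := by
    have e1 : ∫ x, h x ^ 2 ∂μ = ∫ x, (f x * Real.log (f x) - f x + 1) ∂μ :=
      integral_congr_ae (Filter.Eventually.of_forall fun x => hh_sq x)
    have : K = ∫ x, h x ^ 2 ∂μ := by rw [e1, hphi_integral, ← hKL]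
    rw [this]
    exact integral_nonneg fun x => sq_nonneg _
  refine ⟨hKnn, ?_⟩
  -- Cauchy-Schwarz
  have hrpow2 : ∀ y : ℝ, y ^ (2:ℝ) = y ^ 2 := fun y => by
    rw [show (2:ℝ) = ((2:ℕ):ℝ) by norm_num, Real.rpow_natCast]
  have hCS : ∫ x, |f x - 1| ∂μ ≤ Real.sqrt 2 * Real.sqrt K := by
    have hconj : (2:ℝ).HolderConjugate 2 := Real.holderConjugate_iff.mpr ⟨one_lt_two, by norm_num⟩
    have h2 : (ENNReal.ofReal (2:ℝ)) = 2 := by norm_num [ENNReal.ofReal_ofNat]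
    have hHolder := integral_mul_le_Lp_mul_Lq_of_nonneg (μ := μ) hconj
      (Filter.Eventually.of_forall fun x => Real.sqrt_nonneg _)
      (Filter.Eventually.of_forall fun x => Real.sqrt_nonneg _)
      (h2 ▸ hg_memℒp) (h2 ▸ hh_memℒp)
    have hg2 : ∫ x, g x ^ (2:ℝ) ∂μ = 2 := by
      simp_rw [hrpow2]
      rw [integral_congr_ae (Filter.Eventually.of_forall fun x => hg_sq x), integral_div,
        integral_add (hf_int.const_mul 2) (integrable_const 4), integral_const_mul, hf1]
      simp
      norm_num
    have hh2 : ∫ x, h x ^ (2:ℝ) ∂μ = K := by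
      simp_rw [hrpow2]
      rw [integral_congr_ae (Filter.Eventually.of_forall fun x => hh_sq x), hphi_integral, ← hKL]
    rw [hg2, hh2] at hHolder
    have habs_le : ∫ x, |f x - 1| ∂μ ≤ ∫ x, g x * h x ∂μ := by
      refine integral_mono ((hf_int.sub (integrable_const 1)).abs) hgh_int hpoint
    calc ∫ x, |f x - 1| ∂μ ≤ ∫ x, g x * h x ∂μ := habs_le
      _ ≤ (2:ℝ) ^ (1/(2:ℝ)) * K ^ (1/(2:ℝ)) := hHolder
      _ = Real.sqrt 2 * Real.sqrt K := by
          rw [Real.sqrt_eq_rpow, Real.sqrt_eq_rpow]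
  intro A hA
  have habsint : Integrable (fun x => |f x - 1|) μ := (hf_int.sub (integrable_const 1)).abs
  have hsubint : Integrable (fun x => f x - 1) μ := hf_int.sub (integrable_const 1)
  have hsetA : ∫ x in A, (f x - 1) ∂μ = (υ A).toReal - (μ A).toReal := by
    rw [integral_sub hf_int.integrableOn (integrableOn_const (measure_ne_top μ A)),
      Measure.setIntegral_toReal_rnDeriv hac A]
    simp [hfdef, Measure.real]
  have hsetAc : ∫ x in Aᶜ, (f x - 1) ∂μ = (υ Aᶜ).toReal - (μ Aᶜ).toReal := by
    rw [integral_sub hf_int.integrableOn (integrableOn_const (measure_ne_top μ Aᶜ)),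
      Measure.setIntegral_toReal_rnDeriv hac Aᶜ]
    simp [hfdef, Measure.real]
  have hsum : ∫ x in A, (f x - 1) ∂μ + ∫ x in Aᶜ, (f x - 1) ∂μ = 0 := by
    rw [integral_add_compl hA hsubint, integral_sub hf_int (integrable_const 1), hf1]
    simp
  have hb1 : |∫ x in A, (f x - 1) ∂μ| ≤ ∫ x in A, |f x - 1| ∂μ := by
    simpa [Real.norm_eq_abs] using
      norm_integral_le_integral_norm (μ := μ.restrict A) (fun x => f x - 1)
  have hb2 : |∫ x in Aᶜ, (f x - 1) ∂μ| ≤ ∫ x in Aᶜ, |f x - 1| ∂μ := by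
    simpa [Real.norm_eq_abs] using
      norm_integral_le_integral_norm (μ := μ.restrict Aᶜ) (fun x => f x - 1)
  have hsplit : ∫ x in A, |f x - 1| ∂μ + ∫ x in Aᶜ, |f x - 1| ∂μ = ∫ x, |f x - 1| ∂μ :=
    integral_add_compl hA habsint
  have hkey : |(υ A).toReal - (μ A).toReal| ≤ (∫ x, |f x - 1| ∂μ) / 2 := by
    have heq : |∫ x in Aᶜ, (f x - 1) ∂μ| = |∫ x in A, (f x - 1) ∂μ| := by
      rw [show ∫ x in Aᶜ, (f x - 1) ∂μ = -(∫ x in A, (f x - 1) ∂μ) by linarith, abs_neg]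
    rw [← hsetA]
    linarith [hb1, hb2, heq, hsplit]
  have hInn : 0 ≤ ∫ x, |f x - 1| ∂μ := integral_nonneg fun x => abs_nonneg _
  have hfinal : (∫ x, |f x - 1| ∂μ) / 2 ≤ Real.sqrt (K / 2) := by
    rw [Real.le_sqrt (by positivity) (by positivity)]
    have h2 : Real.sqrt 2 ^ 2 = 2 := Real.sq_sqrt (by norm_num)
    have hKsq : Real.sqrt K ^ 2 = K := Real.sq_sqrt hKnn
    nlinarith [hCS, hInn, Real.sqrt_nonneg 2, Real.sqrt_nonneg K,
      mul_nonneg (Real.sqrt_nonneg 2) (Real.sqrt_nonneg K)]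
  exact hkey.trans hfinal


lemma relEnt_ne_bot {α : Type*} [MeasurableSpace α] (υ μ : Measure α) : relEnt υ μ ≠ ⊥ := by
  rw [relEnt]
  split
  · exact EReal.coe_ne_bot _
  · exact top_ne_bot


/-- For any two Borel probability measures μ, ν on a compact S ⊆ ℝ,
`ρ_tv(μ,ν)² ≤ 4 J(μ,ν)` where `ρ_tv(μ,ν) = 2 sup_A |μ(A) − ν(A)|`; equivalently
`(sup_A |μ(A) − ν(A)|)² ≤ J(μ,ν)`. -/
theorem stmt_6 (S : Set ℝ) (hS : IsCompact S) (μ ν : Measure S)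
    [IsProbabilityMeasure μ] [IsProbabilityMeasure ν] :
    (((2 * ⨆ (A : Set S) (_ : MeasurableSet A), |(μ A).toReal - (ν A).toReal|) ^ 2 : ℝ) : EReal)
        ≤ 4 * Jdiv μ ν ∧
      (((⨆ (A : Set S) (_ : MeasurableSet A), |(μ A).toReal - (ν A).toReal|) ^ 2 : ℝ) : EReal)
        ≤ Jdiv μ ν := by
  set s : ℝ := ⨆ (A : Set S) (_ : MeasurableSet A), |(μ A).toReal - (ν A).toReal| with hsdef
  have hs0 : 0 ≤ s := Real.iSup_nonneg fun A => Real.iSup_nonneg fun _ => abs_nonneg _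
  have key : ((s ^ 2 : ℝ) : EReal) ≤ Jdiv μ ν := by
    rw [Jdiv]
    refine le_iInf fun υ => le_iInf fun hυ => ?_
    haveI := hυ
    by_cases h1 : υ ≪ μ ∧ Integrable (llr υ μ) υ
    · by_cases h2 : υ ≪ ν ∧ Integrable (llr υ ν) υ
      · obtain ⟨hK1, b1⟩ := pinsker_bound υ μ h1.1 h1.2
        obtain ⟨hK2, b2⟩ := pinsker_bound υ ν h2.1 h2.2
        rw [relEnt, if_pos h1, relEnt, if_pos h2, ← EReal.coe_add, EReal.coe_le_coe_iff]
        set K1 := ∫ x, llr υ μ x ∂υ with hK1def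
        set K2 := ∫ x, llr υ ν x ∂υ with hK2def
        have hsle : s ≤ Real.sqrt (K1 / 2) + Real.sqrt (K2 / 2) := by
          refine Real.iSup_le (fun A => ?_) (by positivity)
          refine Real.iSup_le (fun hA => ?_) (by positivity)
          calc |(μ A).toReal - (ν A).toReal|
              ≤ |(μ A).toReal - (υ A).toReal| + |(υ A).toReal - (ν A).toReal| :=
                abs_sub_le _ _ _
            _ = |(υ A).toReal - (μ A).toReal| + |(υ A).toReal - (ν A).toReal| := by
                rw [abs_sub_comm]
            _ ≤ Real.sqrt (K1 / 2) + Real.sqrt (K2 / 2) := add_le_add (b1 A hA) (b2 A hA)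
        have hsq := pow_le_pow_left₀ hs0 hsle 2
        have e1 : Real.sqrt (K1 / 2) ^ 2 = K1 / 2 := Real.sq_sqrt (by positivity)
        have e2 : Real.sqrt (K2 / 2) ^ 2 = K2 / 2 := Real.sq_sqrt (by positivity)
        nlinarith [sq_nonneg (Real.sqrt (K1 / 2) - Real.sqrt (K2 / 2))]
      · rw [show relEnt υ ν = ⊤ from if_neg h2, EReal.add_top_of_ne_bot (relEnt_ne_bot υ μ)]
        exact le_top
    · rw [show relEnt υ μ = ⊤ from if_neg h1, EReal.top_add_of_ne_bot (relEnt_ne_bot υ ν)]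
      exact le_top
  constructor
  · have h4 : ∀ J : EReal, ((s ^ 2 : ℝ) : EReal) ≤ J →
        (((4 * s ^ 2 : ℝ)) : EReal) ≤ 4 * J := by
      intro J hJ
      induction J using EReal.rec with
      | bot => exact absurd hJ (EReal.bot_lt_coe _).not_ge
      | coe a =>
          rw [show (4 : EReal) = ((4 : ℝ) : EReal) by norm_cast, ← EReal.coe_mul,
            EReal.coe_le_coe_iff]
          rw [EReal.coe_le_coe_iff] at hJ
          linarith
      | top =>
          rw [EReal.mul_top_of_pos (by norm_num)]
          exact le_top
    have := h4 _ key
    calc (((2 * s) ^ 2 : ℝ) : EReal) = ((4 * s ^ 2 : ℝ) : EReal) := by norm_cast; ring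
      _ ≤ 4 * Jdiv μ ν := this
  · exact key
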